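/- Define c₂(s) = (√b/(2√π)) erfc(√2 s) + √b (e^{−s²}/√(2π))(1 − erfc(s)) + (√b s/√2) erfc(s)((1/2)erfc(s) − 1) for a fixed b > 0. Then c₂'(s) = 2^{−3/2} √b (erfc(s) − 2) erfc(s) < 0 for all s ∈ ℝ, lim_{s→+∞} c₂(s) = 0, and consequently c₂(s) > 0 for all s ∈ ℝ. -/

import Mathlib

open MeasureTheory Real Filter

noncomputable def erfc (t : ℝ) : ℝ :=
  (2 / Real.sqrt Real.pi) * ∫ x in Set.Ioi t, Real.exp (-x ^ 2)

noncomputable def c2 (b s : ℝ) : ℝ :=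
  (Real.sqrt b / (2 * Real.sqrt Real.pi)) * erfc (Real.sqrt 2 * s) +
    Real.sqrt b * (Real.exp (-s ^ 2) / Real.sqrt (2 * Real.pi)) * (1 - erfc s) +
    (Real.sqrt b * s / Real.sqrt 2) * erfc s * ((1 / 2) * erfc s - 1)

lemma gauss_integrable : Integrable (fun x : ℝ => Real.exp (-x ^ 2)) := by
  have h := integrable_exp_neg_mul_sq (one_pos (α := ℝ))
  simpa using h

lemma erfc_hasDerivAt (t : ℝ) :
    HasDerivAt erfc (-(2 / Real.sqrt Real.pi * Real.exp (-t ^ 2))) t := by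
  have hfun : erfc = fun u =>
      (2 / Real.sqrt Real.pi) * ((∫ x : ℝ, Real.exp (-x ^ 2))
        - (∫ x in Set.Iic (0:ℝ), Real.exp (-x ^ 2))
        - ∫ x in (0:ℝ)..u, Real.exp (-x ^ 2)) := by
    funext u
    unfold erfc
    congr 1
    have h1 := intervalIntegral.integral_Iic_add_Ioi (b := u)
      (gauss_integrable.integrableOn) (gauss_integrable.integrableOn) (μ := volume)
    have h2 := intervalIntegral.integral_Iic_sub_Iic (a := (0:ℝ)) (b := u)
      (gauss_integrable.integrableOn) (gauss_integrable.integrableOn) (μ := volume)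
    linarith
  have hd : HasDerivAt (fun u => ∫ x in (0:ℝ)..u, Real.exp (-x ^ 2))
      (Real.exp (-t ^ 2)) t := by
    exact intervalIntegral.integral_hasDerivAt_right
      (gauss_integrable.intervalIntegrable)
      (gauss_integrable.aestronglyMeasurable.stronglyMeasurableAtFilter)
      (Continuous.continuousAt (by fun_prop))
  rw [hfun]
  have := ((hd.const_sub ((∫ x : ℝ, Real.exp (-x ^ 2))
        - (∫ x in Set.Iic (0:ℝ), Real.exp (-x ^ 2)))).const_mul (2 / Real.sqrt Real.pi))
  exact this.congr_deriv (by ring)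

lemma integral_Ioi_pos' {s : Set ℝ} (hvol : volume s ≠ 0)
    (hint : IntegrableOn (fun x : ℝ => Real.exp (-x ^ 2)) s) :
    0 < ∫ x in s, Real.exp (-x ^ 2) := by
  rw [setIntegral_pos_iff_support_of_nonneg_ae
    (Filter.Eventually.of_forall fun x => (Real.exp_pos _).le) hint]
  have : Function.support (fun x : ℝ => Real.exp (-x ^ 2)) = Set.univ := by
    ext x; simp [Function.support, (Real.exp_pos _).ne']
  rw [this, Set.univ_inter]
  exact hvol.bot_lt

lemma erfc_pos (t : ℝ) : 0 < erfc t := by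
  unfold erfc
  apply mul_pos (by positivity)
  exact integral_Ioi_pos' (by simp) gauss_integrable.integrableOn

lemma erfc_lt_two (t : ℝ) : erfc t < 2 := by
  unfold erfc
  have htot : (∫ x : ℝ, Real.exp (-x ^ 2)) = Real.sqrt Real.pi := by
    have := integral_gaussian 1
    simpa using this
  have h1 := intervalIntegral.integral_Iic_add_Ioi (b := t)
    (gauss_integrable.integrableOn) (gauss_integrable.integrableOn) (μ := volume)
  have h2 : 0 < ∫ x in Set.Iic t, Real.exp (-x ^ 2) :=
    integral_Ioi_pos' (by simp) gauss_integrable.integrableOn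
  have hlt : (∫ x in Set.Ioi t, Real.exp (-x ^ 2)) < Real.sqrt Real.pi := by
    rw [← htot]; linarith
  have hπ : 0 < Real.sqrt Real.pi := Real.sqrt_pos.mpr Real.pi_pos
  calc (2 / Real.sqrt Real.pi) * ∫ x in Set.Ioi t, Real.exp (-x ^ 2)
      < (2 / Real.sqrt Real.pi) * Real.sqrt Real.pi := by
        exact mul_lt_mul_of_pos_left hlt (by positivity)
    _ = 2 := by field_simp

lemma integral_mul_exp_Ioi (a : ℝ) :
    ∫ x in Set.Ioi a, x * Real.exp (-x ^ 2) = Real.exp (-a ^ 2) / 2 := by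
  have hint : IntegrableOn (fun x : ℝ => x * Real.exp (-x ^ 2)) (Set.Ioi a) := by
    have h := integrable_mul_exp_neg_mul_sq (one_pos (α := ℝ))
    have h' : Integrable (fun x : ℝ => x * Real.exp (-x ^ 2)) := by simpa using h
    exact h'.integrableOn
  have hderiv : ∀ x ∈ Set.Ici a,
      HasDerivAt (fun y : ℝ => -Real.exp (-y ^ 2) / 2) (x * Real.exp (-x ^ 2)) x := by
    intro x _
    have h1 : HasDerivAt (fun y : ℝ => -y ^ 2) (-(2 * x)) x := by
      exact ((hasDerivAt_pow 2 x).neg).congr_deriv (by norm_num)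
    have h2 := (Real.hasDerivAt_exp (-x ^ 2)).comp x h1
    have h3 := (h2.neg).div_const 2
    exact h3.congr_deriv (by ring)
  have htend : Tendsto (fun y : ℝ => -Real.exp (-y ^ 2) / 2) atTop (nhds 0) := by
    have : Tendsto (fun y : ℝ => -y ^ 2) atTop atBot := by
      simpa using (tendsto_pow_atTop (n := 2) (by norm_num)).neg_atBot
    have := (Real.tendsto_exp_atBot.comp this).neg.div_const 2
    simpa using this
  have := MeasureTheory.integral_Ioi_of_hasDerivAt_of_tendsto' hderiv hint htend
  rw [this]; ring

lemma erfc_le (s : ℝ) (hs : 0 < s) : s * erfc s ≤ Real.exp (-s ^ 2) / Real.sqrt Real.pi := by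
  have hmono : (∫ x in Set.Ioi s, Real.exp (-x ^ 2))
      ≤ ∫ x in Set.Ioi s, (x / s) * Real.exp (-x ^ 2) := by
    apply setIntegral_mono_on gauss_integrable.integrableOn
    · have h := integrable_mul_exp_neg_mul_sq (one_pos (α := ℝ))
      have h' : Integrable (fun x : ℝ => x * Real.exp (-x ^ 2)) := by simpa using h
      have hdi := (h'.div_const s).integrableOn (s := Set.Ioi s)
      have : IntegrableOn (fun x : ℝ => (x / s) * Real.exp (-x ^ 2)) (Set.Ioi s) :=
        hdi.congr_fun (fun x _ => by ring) measurableSet_Ioi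
      exact this
    · exact measurableSet_Ioi
    · intro x hx
      have h1 : (1 : ℝ) ≤ x / s := (one_le_div hs).mpr (le_of_lt hx)
      nlinarith [Real.exp_pos (-x ^ 2)]
  have heq : (∫ x in Set.Ioi s, (x / s) * Real.exp (-x ^ 2))
      = (∫ x in Set.Ioi s, x * Real.exp (-x ^ 2)) / s := by
    rw [← integral_div]
    exact setIntegral_congr_fun measurableSet_Ioi (fun x _ => by ring)
  rw [heq, integral_mul_exp_Ioi] at hmono
  have hπ : 0 < Real.sqrt Real.pi := Real.sqrt_pos.mpr Real.pi_pos
  unfold erfc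
  calc s * ((2 / Real.sqrt Real.pi) * ∫ x in Set.Ioi s, Real.exp (-x ^ 2))
      ≤ s * ((2 / Real.sqrt Real.pi) * (Real.exp (-s ^ 2) / 2 / s)) := by
        apply mul_le_mul_of_nonneg_left _ hs.le
        exact mul_le_mul_of_nonneg_left hmono (by positivity)
    _ = Real.exp (-s ^ 2) / Real.sqrt Real.pi := by field_simp

lemma exp_neg_sq_tendsto : Tendsto (fun s : ℝ => Real.exp (-s ^ 2)) atTop (nhds 0) := by
  have : Tendsto (fun y : ℝ => -y ^ 2) atTop atBot := by
    simpa using (tendsto_pow_atTop (n := 2) (by norm_num)).neg_atBot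
  exact Real.tendsto_exp_atBot.comp this

lemma mul_erfc_tendsto : Tendsto (fun s : ℝ => s * erfc s) atTop (nhds 0) := by
  apply squeeze_zero'
    (Filter.eventually_atTop.mpr ⟨1, fun s hs => mul_nonneg (by linarith) (erfc_pos s).le⟩)
    (Filter.eventually_atTop.mpr ⟨1, fun s hs => erfc_le s (by linarith)⟩)
  have := exp_neg_sq_tendsto.div_const (Real.sqrt Real.pi)
  simpa using this

lemma erfc_tendsto : Tendsto erfc atTop (nhds 0) := by
  apply squeeze_zero' (Filter.eventually_atTop.mpr ⟨1, fun s _ => (erfc_pos s).le⟩)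
    (Filter.eventually_atTop.mpr ⟨1, fun s hs => ?_⟩) mul_erfc_tendsto
  nlinarith [erfc_pos s]

lemma c2_hasDerivAt (b s : ℝ) :
    HasDerivAt (c2 b)
      ((2 : ℝ) ^ (-(3 : ℝ) / 2) * Real.sqrt b * (erfc s - 2) * erfc s) s := by
  set P := Real.sqrt Real.pi with hP
  set Q := Real.sqrt 2 with hQ
  set B := Real.sqrt b with hB
  set R := Real.sqrt (2 * Real.pi) with hRdef
  have hfun : c2 b = fun u =>
      (B / (2 * P)) * erfc (Q * u)
      + (B / R) * (Real.exp (-u ^ 2) * (1 - erfc u))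
      + (B / Q) * (u * erfc u * ((1 / 2) * erfc u - 1)) := by
    funext u; unfold c2; ring
  have h1 : HasDerivAt (fun u => erfc (Q * u)) (-(2 / P * Real.exp (-(Q * s) ^ 2)) * Q) s := by
    have hin : HasDerivAt (fun u : ℝ => Q * u) Q s := by
      simpa using (hasDerivAt_id s).const_mul Q
    exact (erfc_hasDerivAt (Q * s)).comp s hin
  have hexp : HasDerivAt (fun u : ℝ => Real.exp (-u ^ 2))
      (Real.exp (-s ^ 2) * (-(2 * s))) s := by
    have h1' : HasDerivAt (fun y : ℝ => -y ^ 2) (-(2 * s)) s := by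
      exact ((hasDerivAt_pow 2 s).neg).congr_deriv (by norm_num)
    exact (Real.hasDerivAt_exp (-s ^ 2)).comp s h1'
  have herfc := erfc_hasDerivAt s
  have h2 : HasDerivAt (fun u => Real.exp (-u ^ 2) * (1 - erfc u))
      (Real.exp (-s ^ 2) * (-(2 * s)) * (1 - erfc s)
        + Real.exp (-s ^ 2) * (0 - -(2 / P * Real.exp (-s ^ 2)))) s :=
    hexp.mul ((hasDerivAt_const s (1 : ℝ)).sub herfc)
  have h3 : HasDerivAt (fun u => u * erfc u * ((1 / 2) * erfc u - 1))
      ((1 * erfc s + s * -(2 / P * Real.exp (-s ^ 2))) * ((1 / 2) * erfc s - 1)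
        + s * erfc s * ((1 / 2) * -(2 / P * Real.exp (-s ^ 2)))) s := by
    have ha : HasDerivAt (fun u : ℝ => u * erfc u)
        (1 * erfc s + s * -(2 / P * Real.exp (-s ^ 2))) s :=
      (hasDerivAt_id s).mul herfc
    have hb : HasDerivAt (fun u : ℝ => (1 / 2) * erfc u - 1)
        ((1 / 2) * -(2 / P * Real.exp (-s ^ 2))) s :=
      (herfc.const_mul (1 / 2 : ℝ)).sub_const 1
    exact ha.mul hb
  have htot := ((h1.const_mul (B / (2 * P))).add (h2.const_mul (B / R))).add
    (h3.const_mul (B / Q))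
  rw [hfun]
  refine htot.congr_deriv ?_
  have hQQ : Q * Q = 2 := Real.mul_self_sqrt (by norm_num)
  have hPpos : 0 < P := Real.sqrt_pos.mpr Real.pi_pos
  have hQpos : 0 < Q := Real.sqrt_pos.mpr (by norm_num)
  have hR : R = Q * P := by rw [hRdef, hP, hQ, Real.sqrt_mul (by norm_num)]
  have hsq : (Q * s) ^ 2 = s ^ 2 + s ^ 2 := by
    rw [mul_pow]; nlinarith [hQQ]
  have hgg : Real.exp (-(Q * s) ^ 2) = Real.exp (-s ^ 2) * Real.exp (-s ^ 2) := by
    rw [hsq, show -(s ^ 2 + s ^ 2) = -s ^ 2 + -s ^ 2 by ring, Real.exp_add]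
  have h32 : (2 : ℝ) ^ (-(3 : ℝ) / 2) = 1 / (2 * Q) := by
    have hpos : (2 : ℝ) ^ ((3 : ℝ) / 2) = 2 * Q := by
      rw [show (3 : ℝ) / 2 = 1 + 1 / 2 by norm_num, Real.rpow_add (by norm_num), Real.rpow_one,
        hQ, Real.sqrt_eq_rpow]
    rw [show (-(3 : ℝ) / 2) = -((3 : ℝ) / 2) by ring, Real.rpow_neg (by norm_num), hpos]
    rw [one_div]
  rw [hgg, hR, h32]
  set G := Real.exp (-s ^ 2)
  set E := erfc s
  field_simp
  ring_nf
  linear_combination (-(2:ℝ) * B * G ^ 2) * hQQ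

lemma h32pos : (0 : ℝ) < (2 : ℝ) ^ (-(3 : ℝ) / 2) := Real.rpow_pos_of_pos (by norm_num) _

lemma c2_tendsto (b : ℝ) : Tendsto (c2 b) atTop (nhds 0) := by
  have hQpos : (0 : ℝ) < Real.sqrt 2 := Real.sqrt_pos.mpr (by norm_num)
  have t1 : Tendsto (fun s : ℝ => (Real.sqrt b / (2 * Real.sqrt Real.pi)) *
      erfc (Real.sqrt 2 * s)) atTop (nhds 0) := by
    have hcomp : Tendsto (fun s : ℝ => Real.sqrt 2 * s) atTop atTop :=
      Filter.Tendsto.const_mul_atTop hQpos tendsto_id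
    have := (erfc_tendsto.comp hcomp).const_mul (Real.sqrt b / (2 * Real.sqrt Real.pi))
    simpa using this
  have t2 : Tendsto (fun s : ℝ => Real.sqrt b *
      (Real.exp (-s ^ 2) / Real.sqrt (2 * Real.pi)) * (1 - erfc s)) atTop (nhds 0) := by
    have ha : Tendsto (fun s : ℝ => Real.sqrt b *
        (Real.exp (-s ^ 2) / Real.sqrt (2 * Real.pi))) atTop (nhds 0) := by
      have := (exp_neg_sq_tendsto.div_const (Real.sqrt (2 * Real.pi))).const_mul (Real.sqrt b)
      simpa using this
    have hb' : Tendsto (fun s : ℝ => 1 - erfc s) atTop (nhds 1) := by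
      have := (tendsto_const_nhds (x := (1:ℝ)) (f := atTop)).sub erfc_tendsto
      simpa using this
    have := ha.mul hb'
    simpa using this
  have t3 : Tendsto (fun s : ℝ => (Real.sqrt b * s / Real.sqrt 2) * erfc s *
      ((1 / 2) * erfc s - 1)) atTop (nhds 0) := by
    have ha : Tendsto (fun s : ℝ => (Real.sqrt b / Real.sqrt 2) * (s * erfc s))
        atTop (nhds 0) := by
      have := mul_erfc_tendsto.const_mul (Real.sqrt b / Real.sqrt 2)
      simpa using this
    have hb' : Tendsto (fun s : ℝ => (1 / 2) * erfc s - 1) atTop (nhds (-1)) := by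
      have := ((erfc_tendsto.const_mul (1 / 2 : ℝ)).sub_const 1)
      simpa using this
    have hmul := ha.mul hb'
    rw [zero_mul] at hmul
    apply hmul.congr
    intro s; ring
  have := (t1.add t2).add t3
  simp only [add_zero] at this
  exact this.congr (fun s => by unfold c2; ring)

theorem c2_deriv_neg_and_pos (b : ℝ) (hb : 0 < b) :
    (∀ s : ℝ,
      HasDerivAt (c2 b) ((2 : ℝ) ^ (-(3 : ℝ) / 2) * Real.sqrt b * (erfc s - 2) * erfc s) s ∧
      (2 : ℝ) ^ (-(3 : ℝ) / 2) * Real.sqrt b * (erfc s - 2) * erfc s < 0) ∧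
    Tendsto (c2 b) atTop (nhds 0) ∧
    ∀ s : ℝ, 0 < c2 b s := by
  have hBpos : 0 < Real.sqrt b := Real.sqrt_pos.mpr hb
  have hneg : ∀ s : ℝ,
      (2 : ℝ) ^ (-(3 : ℝ) / 2) * Real.sqrt b * (erfc s - 2) * erfc s < 0 := fun s =>
    mul_neg_of_neg_of_pos
      (mul_neg_of_pos_of_neg (mul_pos h32pos hBpos) (by linarith [erfc_lt_two s]))
      (erfc_pos s)
  refine ⟨fun s => ⟨c2_hasDerivAt b s, hneg s⟩, c2_tendsto b, fun s => ?_⟩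
  have hanti : StrictAnti (c2 b) := by
    apply strictAnti_of_deriv_neg
    intro x
    rw [(c2_hasDerivAt b x).deriv]
    exact hneg x
  have h1 : c2 b (s + 1) < c2 b s := hanti (by linarith)
  have h2 : 0 ≤ c2 b (s + 1) :=
    le_of_tendsto (c2_tendsto b)
      (Filter.eventually_atTop.mpr ⟨s + 1, fun t ht => hanti.antitone ht⟩)
  linarith
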